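/- Uniform-mesh jump bound for ENO reconstruction: on a uniform mesh of width h, the jump in p-th order ENO reconstructed interface values satisfies (v⁺_{1/2} − v⁻_{1/2})/(v̄_1 − v̄_0) ≤ C_p where C_p = 2^{p−1} (1/p!) Σ_{k=0}^{p−1} k!(p−k−1)!, whenever v̄_1 ≠ v̄_0. -/

import Mathlib

/-- Divided differences of the data `V` at the points `x`:
`dd x V j i = V[x_i, ..., x_{i+j}]`. -/
noncomputable def dd (x V : ℤ → ℝ) : ℕ → ℤ → ℝ
  | 0, i => V i
  | j + 1, i => (dd x V j (i + 1) - dd x V j i) / (x (i + (j : ℤ) + 1) - x i)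

/-- ENO reconstruction stencil offsets for cell `i` (interfaces `x_i`, `x_{i+1}`):
`enoOffsetR x V i j` is the left offset `r_j` of the `j+1`-point stencil
`{x_{i+r_j}, ..., x_{i+r_j+j}}` chosen by the ENO selection procedure applied to
the data `V` (the primitive) at the points `x`. -/
noncomputable def enoOffsetR (x V : ℤ → ℝ) (i : ℤ) : ℕ → ℤ
  | 0 => 0
  | 1 => 0
  | j + 2 =>
    let r := enoOffsetR x V i (j + 1)
    if |dd x V (j + 2) (i + r - 1)| < |dd x V (j + 2) (i + r)| then r - 1 else r


open Polynomial Lagrange Finset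

lemma x_eq {h : ℝ} {x : ℤ → ℝ} (hx : ∀ j, x (j + 1) = x j + h) : ∀ j : ℤ, x j = x 0 + j * h := by
  intro j
  induction j using Int.induction_on with
  | zero => simp
  | succ k ih => push_cast [hx k, ih]; ring
  | pred k ih =>
      have := hx (-k - 1)
      simp only [sub_add_cancel] at this
      rw [this] at ih
      push_cast at ih ⊢
      linarith

lemma x_sub {h : ℝ} {x : ℤ → ℝ} (hx : ∀ j, x (j + 1) = x j + h) (a b : ℤ) :
    x b - x a = (b - a) * h := by
  rw [x_eq hx a, x_eq hx b]; push_cast; ring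

section Newton
variable {x V : ℤ → ℝ}

lemma dd_rec (x V : ℤ → ℝ) (n : ℕ) (a : ℤ) :
    dd x V (n + 1) a = (dd x V n (a + 1) - dd x V n a) / (x (a + n + 1) - x a) := rfl

lemma ext_interp (hinj : Function.Injective x) (s : Finset ℤ) (c : ℤ) (hc : c ∉ s) (d : ℝ)
    (heval : eval (x c) (interpolate s x V) + d * eval (x c) (nodal s x) = V c) :
    interpolate (insert c s) x V = interpolate s x V + C d * nodal s x := by
  symm
  apply eq_interpolate_of_eval_eq _ hinj.injOn
  · rw [Finset.card_insert_of_notMem hc]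
    refine lt_of_le_of_lt (degree_add_le _ _) (max_lt ?_ ?_)
    · refine lt_of_lt_of_le (degree_interpolate_lt _ hinj.injOn) ?_
      exact_mod_cast Nat.le_succ _
    · refine lt_of_le_of_lt (degree_mul_le _ _) ?_
      refine lt_of_le_of_lt (add_le_add degree_C_le degree_nodal.le) ?_
      rw [zero_add]
      exact_mod_cast Nat.lt_succ_self _
  · intro i hi
    rcases Finset.mem_insert.1 hi with rfl | his
    · simpa using heval
    · simp only [eval_add, eval_mul, eval_C]
      rw [eval_interpolate_at_node _ hinj.injOn his, eval_nodal_at_node his]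
      ring

end Newton

section Newton2
variable {x V : ℤ → ℝ}

lemma newton (hinj : Function.Injective x) (n : ℕ) (a : ℤ) :
    (interpolate (Finset.Icc a (a + n + 1)) x V = interpolate (Finset.Icc a (a + n)) x V
      + C (dd x V (n + 1) a) * nodal (Finset.Icc a (a + n)) x) ∧
    (interpolate (Finset.Icc a (a + n + 1)) x V = interpolate (Finset.Icc (a + 1) (a + n + 1)) x V
      + C (dd x V (n + 1) a) * nodal (Finset.Icc (a + 1) (a + n + 1)) x) := by
  induction n generalizing a with
  | zero =>
      simp only [Nat.cast_zero, add_zero]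
      have hne : x (a + 1) - x a ≠ 0 := by
        intro hc; exact absurd (hinj (sub_eq_zero.1 hc)) (by omega)
      have hdd : dd x V 1 a * (x (a + 1) - x a) = V (a + 1) - V a := by
        rw [dd_rec]
        simp only [Nat.cast_zero, add_zero]
        exact div_mul_cancel₀ _ hne
      constructor
      · rw [show Finset.Icc a (a + 1) = insert (a + 1) (Finset.Icc a a) from by
          ext j; simp only [Finset.mem_Icc, Finset.mem_insert]; omega]
        apply ext_interp hinj _ _ (by simp)
        rw [Finset.Icc_self, interpolate_singleton, eval_C, eval_nodal, Finset.prod_singleton]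
        rw [show dd x V (0 + 1) a = dd x V 1 a from rfl] at hdd ⊢
        linarith [hdd]
      · rw [show Finset.Icc a (a + 1) = insert a (Finset.Icc (a + 1) (a + 1)) from by
          ext j; simp only [Finset.mem_Icc, Finset.mem_insert]; omega]
        apply ext_interp hinj _ _ (by simp)
        rw [Finset.Icc_self, interpolate_singleton, eval_C, eval_nodal, Finset.prod_singleton]
        rw [show dd x V (0 + 1) a = dd x V 1 a from rfl] at hdd ⊢
        nlinarith [hdd]
  | succ n ih =>
      have hIcc1 : Finset.Icc a (a + (n + 1 : ℕ) + 1) = insert (a + n + 2) (Finset.Icc a (a + n + 1)) := by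
        ext j; simp only [Finset.mem_Icc, Finset.mem_insert]; push_cast; omega
      have hIcc2 : Finset.Icc a (a + (n + 1 : ℕ) + 1) = insert a (Finset.Icc (a + 1) (a + n + 2)) := by
        ext j; simp only [Finset.mem_Icc, Finset.mem_insert]; push_cast; omega
      have hIcc3 : Finset.Icc a (a + (n + 1 : ℕ)) = Finset.Icc a (a + n + 1) := by
        congr 1; push_cast; ring
      have hIcc4 : Finset.Icc (a + 1) (a + (n + 1 : ℕ) + 1) = Finset.Icc (a + 1) (a + n + 2) := by
        congr 1; push_cast; ring
      have hIcc5 : Finset.Icc (a + 1) (a + 1 + n + 1) = Finset.Icc (a + 1) (a + n + 2) := by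
        congr 1; ring
      have hIcc6 : Finset.Icc (a + 1) (a + 1 + n) = Finset.Icc (a + 1) (a + n + 1) := by
        congr 1; ring
      obtain ⟨ihr, ihl⟩ := ih (a + 1)
      obtain ⟨ihr0, ihl0⟩ := ih a
      rw [hIcc5, hIcc6] at ihr
      set s : Finset ℤ := Finset.Icc (a + 1) (a + n + 1) with hs
      have hd2 : dd x V (n + 1 + 1) a * (x (a + n + 2) - x a) =
          dd x V (n + 1) (a + 1) - dd x V (n + 1) a := by
        rw [dd_rec]
        rw [show a + (n + 1 : ℕ) + 1 = a + n + 2 from by push_cast; ring]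
        apply div_mul_cancel₀
        intro hc; exact absurd (hinj (sub_eq_zero.1 hc)) (by omega)
      have E3 : nodal (Finset.Icc a (a + n + 1)) x = (X - C (x a)) * nodal s x := by
        rw [nodal_eq_mul_nodal_erase (show a ∈ Finset.Icc a (a + n + 1) from by
          simp only [Finset.mem_Icc]; omega)]
        congr 2
        ext j; simp only [Finset.mem_erase, Finset.mem_Icc, hs]; omega
      have F3 : nodal (Finset.Icc (a + 1) (a + n + 2)) x
          = (X - C (x (a + n + 2))) * nodal s x := by
        rw [nodal_eq_mul_nodal_erase (show a + n + 2 ∈ Finset.Icc (a + 1) (a + n + 2) from by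
          simp only [Finset.mem_Icc]; omega)]
        congr 2
        ext j; simp only [Finset.mem_erase, Finset.mem_Icc, hs]; omega
      constructor
      · rw [hIcc1, hIcc3]
        apply ext_interp hinj _ _ (by simp only [Finset.mem_Icc]; omega)
        have E1 := congrArg (eval (x (a + n + 2))) ihl0
        have E2 := congrArg (eval (x (a + n + 2))) ihr
        rw [eval_interpolate_at_node _ hinj.injOn (show a + n + 2 ∈ Finset.Icc (a + 1) (a + n + 2)
          from by simp only [Finset.mem_Icc]; omega)] at E2
        simp only [eval_add, eval_mul, eval_C] at E1 E2
        rw [E3]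
        simp only [eval_mul, eval_sub, eval_X, eval_C]
        linear_combination E1 - E2 + eval (x (a + (n:ℤ) + 2)) (nodal s x) * hd2
      · rw [hIcc2, hIcc4]
        apply ext_interp hinj _ _ (by simp only [Finset.mem_Icc]; omega)
        have F1 := congrArg (eval (x a)) ihr
        have F2 := congrArg (eval (x a)) ihl0
        rw [eval_interpolate_at_node _ hinj.injOn (show a ∈ Finset.Icc a (a + n + 1)
          from by simp only [Finset.mem_Icc]; omega)] at F2
        simp only [eval_add, eval_mul, eval_C] at F1 F2
        rw [F3]
        simp only [eval_mul, eval_sub, eval_X, eval_C]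
        linear_combination F1 - F2 - eval (x a) (nodal s x) * hd2

end Newton2

noncomputable def Wd (x : ℤ → ℝ) (p : ℕ) (i : ℤ) : ℝ :=
  ∏ j ∈ (Finset.Icc i (i + p)).erase 1, (x 1 - x j)

section Jump
variable {h : ℝ} {x V : ℤ → ℝ}

lemma eval_deriv_nodal (s : Finset ℤ) (h1 : (1:ℤ) ∈ s) :
    eval (x 1) (derivative (nodal s x)) = ∏ j ∈ s.erase 1, (x 1 - x j) := by
  rw [eval_nodal_derivative_eval_node_eq h1, eval_nodal]

lemma jump (hinj : Function.Injective x) (p : ℕ) (i : ℤ) (hi0 : i ≤ 0) (hip : 1 ≤ i + p) :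
    eval (x 1) (derivative (interpolate (Finset.Icc (i+1) (i+1+p)) x V))
    - eval (x 1) (derivative (interpolate (Finset.Icc i (i+p)) x V))
    = dd x V (p+1) i * (Wd x p i - Wd x p (i+1)) := by
  obtain ⟨h1, h2⟩ := newton (V := V) hinj p i
  have key : interpolate (Finset.Icc (i+1) (i+1+p)) x V - interpolate (Finset.Icc i (i+p)) x V
      = C (dd x V (p+1) i) *
        (nodal (Finset.Icc i (i+p)) x - nodal (Finset.Icc (i+1) (i+p+1)) x) := by
    rw [show Finset.Icc (i+1) (i+1+p) = Finset.Icc (i+1) (i+p+1) from by congr 1; ring,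
      show (p:ℕ)+1 = p+1 from rfl]
    rw [show Finset.Icc i (i + p + 1) = Finset.Icc i (i + (p:ℤ) + 1) from rfl] at h1 h2
    linear_combination h1 - h2
  have := congrArg (fun q => eval (x 1) (derivative q)) key
  simp only [derivative_sub, eval_sub, derivative_mul, derivative_C, zero_mul, zero_add,
    eval_add, eval_mul, eval_C] at this
  rw [eval_deriv_nodal (x := x) _ (by simp only [Finset.mem_Icc]; omega),
    eval_deriv_nodal (x := x) _ (by simp only [Finset.mem_Icc]; omega)] at this
  rw [this]
  unfold Wd
  rw [show Finset.Icc (i+1) (i+1+(p:ℤ)) = Finset.Icc (i+1) (i+(p:ℤ)+1) from by congr 1; ring]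

lemma prodL (hh : 0 < h) : ∀ n : ℕ,
    ∏ j ∈ Finset.Icc (1-(n:ℤ)) 0, (|((1 - j : ℤ) : ℝ)| * h) = h^n * n.factorial := by
  intro n
  induction n with
  | zero => simp
  | succ n ihn =>
      rw [show ((n+1:ℕ):ℤ) = (n:ℤ)+1 from by push_cast; ring]
      rw [show Finset.Icc (1-((n:ℤ)+1)) 0 = insert (-(n:ℤ)) (Finset.Icc (1-(n:ℤ)) 0) from by
        ext j; simp only [Finset.mem_Icc, Finset.mem_insert]; omega]
      rw [Finset.prod_insert (by simp only [Finset.mem_Icc]; omega), ihn]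
      rw [show ((1 - -(n:ℤ) : ℤ) : ℝ) = (n:ℝ) + 1 from by push_cast; ring]
      rw [abs_of_pos (by positivity)]
      rw [Nat.factorial_succ]
      push_cast
      ring

lemma prodR (hh : 0 < h) : ∀ m : ℕ,
    ∏ j ∈ Finset.Icc (2:ℤ) (1+(m:ℤ)), (|((1 - j : ℤ) : ℝ)| * h) = h^m * m.factorial := by
  intro m
  induction m with
  | zero => simp
  | succ m ihm =>
      rw [show ((m+1:ℕ):ℤ) = (m:ℤ)+1 from by push_cast; ring]
      rw [show Finset.Icc (2:ℤ) (1+((m:ℤ)+1)) = insert (2+(m:ℤ)) (Finset.Icc (2:ℤ) (1+(m:ℤ)))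
        from by ext j; simp only [Finset.mem_Icc, Finset.mem_insert]; omega]
      rw [Finset.prod_insert (by simp only [Finset.mem_Icc]; omega), ihm]
      rw [show ((1 - (2+(m:ℤ)) : ℤ) : ℝ) = -((m:ℝ) + 1) from by push_cast; ring]
      rw [abs_neg, abs_of_pos (by positivity)]
      rw [Nat.factorial_succ]
      push_cast
      ring

lemma Wd_abs (hh : 0 < h) (hx : ∀ j, x (j + 1) = x j + h) (p n m : ℕ) (hnm : n + m = p) :
    |Wd x p (1 - (n:ℤ))| = h^p * n.factorial * m.factorial := by
  unfold Wd
  rw [Finset.abs_prod]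
  have hfac : ∀ j : ℤ, |x 1 - x j| = |((1 - j : ℤ) : ℝ)| * h := by
    intro j
    rw [x_sub hx j 1, abs_mul, abs_of_pos hh]
    norm_cast
  rw [Finset.prod_congr rfl (fun j _ => hfac j)]
  have hsplit : (Finset.Icc (1-(n:ℤ)) (1-(n:ℤ)+p)).erase 1
      = Finset.Icc (1-(n:ℤ)) 0 ∪ Finset.Icc (2:ℤ) (1+(m:ℤ)) := by
    ext j; simp only [Finset.mem_erase, Finset.mem_Icc, Finset.mem_union]; omega
  rw [hsplit, Finset.prod_union (by
    rw [Finset.disjoint_left]; intro j hj1 hj2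
    simp only [Finset.mem_Icc] at hj1 hj2; omega)]
  rw [prodL hh n, prodR hh m, ← hnm]
  ring

end Jump


lemma eno_one (x V : ℤ → ℝ) (i : ℤ) : enoOffsetR x V i 1 = 0 := rfl

lemma eno_step (x V : ℤ → ℝ) (i : ℤ) (k : ℕ) (hk : 1 ≤ k) :
    enoOffsetR x V i (k + 1) =
      if |dd x V (k + 1) (i + enoOffsetR x V i k - 1)| < |dd x V (k + 1) (i + enoOffsetR x V i k)|
      then enoOffsetR x V i k - 1 else enoOffsetR x V i k := by
  obtain ⟨m, rfl⟩ : ∃ m, k = m + 1 := ⟨k - 1, by omega⟩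
  rfl

lemma eno_bounds (x V : ℤ → ℝ) (i : ℤ) : ∀ k : ℕ, 1 ≤ k →
    1 - (k : ℤ) ≤ enoOffsetR x V i k ∧ enoOffsetR x V i k ≤ 0 := by
  intro k
  induction k with
  | zero => omega
  | succ k ih =>
      intro _
      by_cases hk : 1 ≤ k
      · obtain ⟨h1, h2⟩ := ih hk
        rw [eno_step x V i k hk]
        split_ifs <;> push_cast <;> omega
      · have : k = 0 := by omega
        subst this
        rw [eno_one]; norm_num

section Inv
variable {h : ℝ} {x vbar V : ℤ → ℝ}

lemma x_eq' (hx : ∀ j, x (j + 1) = x j + h) : ∀ j : ℤ, x j = x 0 + j * h := by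
  intro j
  induction j using Int.induction_on with
  | zero => simp
  | succ k ih => push_cast [hx k, ih]; ring
  | pred k ih =>
      have := hx (-k - 1)
      simp only [sub_add_cancel] at this
      rw [this] at ih
      push_cast at ih ⊢
      linarith

lemma x_sub' (hx : ∀ j, x (j + 1) = x j + h) (a b : ℤ) : x b - x a = (b - a) * h := by
  rw [x_eq' hx a, x_eq' hx b]; push_cast; ring

lemma dd_succ (hx : ∀ j, x (j + 1) = x j + h) (k : ℕ) (i : ℤ) :
    dd x V (k + 1) i = (dd x V k (i + 1) - dd x V k i) / ((k + 1) * h) := by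
  show (dd x V k (i + 1) - dd x V k i) / (x (i + k + 1) - x i) = _
  rw [x_sub' hx i (i + k + 1)]
  push_cast; ring_nf

lemma dd_one (hV : ∀ j, V (j + 1) - V j = h * vbar j) (hh : 0 < h)
    (hx : ∀ j, x (j + 1) = x j + h) (i : ℤ) : dd x V 1 i = vbar i := by
  show (V (i + 1) - V i) / (x (i + (0:ℕ) + 1) - x i) = _
  rw [hV i, x_sub' hx i (i + (0:ℕ) + 1)]
  push_cast
  field_simp; ring

lemma eno_inv (hh : 0 < h) (hx : ∀ j, x (j + 1) = x j + h)
    (hV : ∀ j, V (j + 1) - V j = h * vbar j) :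
    ∀ k : ℕ, 1 ≤ k → ∀ j : ℤ,
      min (enoOffsetR x V 0 k) (1 + enoOffsetR x V 1 k) ≤ j →
      j < max (enoOffsetR x V 0 k) (1 + enoOffsetR x V 1 k) →
      |dd x V (k + 1) j| ≤ 2 ^ (k - 1) * |vbar 1 - vbar 0| / ((k + 1).factorial * h ^ k) := by
  intro k hk
  induction k, hk using Nat.le_induction with
  | base =>
      intro j hj1 hj2
      rw [eno_one, eno_one] at hj1 hj2
      have hj : j = 0 := by omega
      subst hj
      have h2 : dd x V 2 0 = (vbar 1 - vbar 0) / (2 * h) := by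
        rw [show (2:ℕ) = 1 + 1 from rfl, dd_succ hx 1 0,
          dd_one hV hh hx, dd_one hV hh hx]
        norm_num
      rw [h2, abs_div, abs_of_pos (by positivity : (0:ℝ) < 2 * h)]
      apply le_of_eq
      norm_num [Nat.factorial]
  | succ k hk ih =>
      intro j hj1 hj2
      set q0 := enoOffsetR x V 0 k with hq0
      set q1 := enoOffsetR x V 1 k with hq1
      set q0' := enoOffsetR x V 0 (k + 1) with hq0'
      set q1' := enoOffsetR x V 1 (k + 1) with hq1'
      set B : ℝ := 2 ^ (k - 1) * |vbar 1 - vbar 0| / ((k + 1).factorial * h ^ k) with hB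
      have hstep0 := eno_step x V 0 k hk
      have hstep1 := eno_step x V 1 k hk
      simp only [zero_add, ← hq0, ← hq1, ← hq0', ← hq1'] at hstep0 hstep1
      have hA0 : q0' = q0 - 1 ∨ q0' = q0 := by
        rw [hstep0]; split_ifs <;> [left; right] <;> rfl
      have hB0 : q1' = q1 - 1 ∨ q1' = q1 := by
        rw [hstep1]; split_ifs <;> [left; right] <;> rfl
      have hA1 : |dd x V (k + 1) q0'| ≤ |dd x V (k + 1) (q0 - 1)| := by
        rw [hstep0]; split_ifs with hc
        · exact le_rfl
        · exact not_lt.1 hc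
      have hA2 : |dd x V (k + 1) q0'| ≤ |dd x V (k + 1) q0| := by
        rw [hstep0]; split_ifs with hc
        · exact hc.le
        · exact le_rfl
      have hB1 : |dd x V (k + 1) (1 + q1')| ≤ |dd x V (k + 1) q1| := by
        rw [hstep1]
        have e : (1 : ℤ) + q1 - 1 = q1 := by ring
        split_ifs with hc
        · rw [show (1 : ℤ) + (q1 - 1) = q1 by ring]
        · rw [e] at hc
          exact not_lt.1 hc
      have hB2 : |dd x V (k + 1) (1 + q1')| ≤ |dd x V (k + 1) (1 + q1)| := by
        rw [hstep1]
        split_ifs with hc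
        · rw [show (1 : ℤ) + (q1 - 1) = 1 + q1 - 1 by ring]
          exact hc.le
        · exact le_rfl
      have hsame : q0 = 1 + q1 → q0' = 1 + q1' := by
        intro hq
        rw [hstep0, hstep1, show (1:ℤ) + q1 - 1 = q0 - 1 by omega, show (1:ℤ) + q1 = q0 by omega]
        by_cases hc : |dd x V (k + 1) (q0 - 1)| < |dd x V (k + 1) q0|
        · rw [if_pos hc, if_pos hc]; omega
        · rw [if_neg hc, if_neg hc]; omega
      have hne' : q0' ≠ 1 + q1' := by omega
      have hab : q0 ≠ 1 + q1 := fun hq => hne' (hsame hq)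
      have hCTRL : ∀ m : ℤ, min q0' (1 + q1') ≤ m → m ≤ max q0' (1 + q1') →
          |dd x V (k + 1) m| ≤ B := by
        intro m hm1 hm2
        rcases (Ne.lt_or_gt hab) with hlt | hlt
        · -- q0 < 1 + q1
          by_cases hm : m < q0
          · have hmm : q0' = q0 - 1 ∧ m = q0 - 1 := by omega
            rw [hmm.2, ← hmm.1]
            exact hA2.trans (ih q0 (by omega) (by omega))
          · by_cases hm' : q1 < m
            · have hmm : q1' = q1 ∧ m = 1 + q1 := by omega
              rw [hmm.2, show (1:ℤ) + q1 = 1 + q1' by omega]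
              exact hB1.trans (ih q1 (by omega) (by omega))
            · exact ih m (by omega) (by omega)
        · -- 1 + q1 < q0
          by_cases hm : m < 1 + q1
          · have hmm : q1' = q1 - 1 ∧ m = q1 := by omega
            rw [hmm.2, show q1 = 1 + q1' by omega]
            exact hB2.trans (ih (1 + q1) (by omega) (by omega))
          · by_cases hm' : q0 - 1 < m
            · have hmm : q0' = q0 ∧ m = q0 := by omega
              rw [hmm.2, ← hmm.1]
              exact hA1.trans (ih (q0 - 1) (by omega) (by omega))
            · exact ih m (by omega) (by omega)
      -- conclude
      rw [dd_succ hx (k + 1) j, abs_div,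
        abs_of_pos (by positivity : (0:ℝ) < (((k+1:ℕ):ℝ) + 1) * h)]
      have hnum : |dd x V (k + 1) (j + 1) - dd x V (k + 1) j| ≤ 2 * B :=
        (abs_sub _ _).trans (by
          have g1 := hCTRL (j + 1) (by omega) (by omega)
          have g2 := hCTRL j (by omega) (by omega)
          linarith)
      have hpos : (0:ℝ) < (((k+1:ℕ):ℝ) + 1) * h := by positivity
      refine le_trans (div_le_div_of_nonneg_right hnum hpos.le) (le_of_eq ?_)
      calc (2 * B) / ((((k+1:ℕ):ℝ) + 1) * h)
          = 2 ^ (k + 1 - 1) * |vbar 1 - vbar 0| / ((k + 1 + 1).factorial * h ^ (k + 1)) := by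
            obtain ⟨k₀, rfl⟩ : ∃ k₀, k = k₀ + 1 := ⟨k - 1, by omega⟩
            rw [hB, show k₀ + 1 + 1 - 1 = k₀ + 1 from by omega,
              show k₀ + 1 - 1 = k₀ from by omega, Nat.factorial_succ (k₀ + 1 + 1)]
            have hf : (0:ℝ) < ((k₀ + 1 + 1).factorial : ℝ) := by positivity
            field_simp
            push_cast
            ring

end Inv

lemma Tident (p m : ℕ) (hm : m < p) :
    (m.factorial : ℝ) * ((p - m).factorial : ℝ)
      + ((m + 1).factorial : ℝ) * ((p - m - 1).factorial : ℝ)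
    = ((p : ℝ) + 1) * ((m.factorial : ℝ) * ((p - m - 1).factorial : ℝ)) := by
  obtain ⟨d, hd⟩ : ∃ d, p - m = d + 1 := ⟨p - m - 1, by omega⟩
  have hd2 : p - m - 1 = d := by omega
  have hp : (p : ℝ) = (d : ℝ) + (m : ℝ) + 1 := by
    have : p = d + m + 1 := by omega
    rw [this]; push_cast; ring
  rw [hd2, hd, hp, Nat.factorial_succ, Nat.factorial_succ]
  push_cast
  ring

lemma tele (g : ℤ → ℝ) : ∀ (n : ℕ) (c : ℤ),
    |g (c + n) - g c| ≤ ∑ t ∈ Finset.range n, |g (c + t + 1) - g (c + t)| := by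
  intro n
  induction n with
  | zero => simp
  | succ n ihn =>
      intro c
      rw [Finset.sum_range_succ]
      have e : (c + ((n:ℤ) + 1)) = (c + n) + 1 := by ring
      calc |g (c + ((n:ℕ)+1:ℕ)) - g c|
          = |(g (c + n + 1) - g (c + n)) + (g (c + n) - g c)| := by
            rw [show ((((n:ℕ)+1:ℕ)):ℤ) = (n:ℤ)+1 from by push_cast; ring, e]; ring_nf
        _ ≤ |g (c + n + 1) - g (c + n)| + |g (c + n) - g c| := abs_add_le _ _
        _ ≤ _ := by rw [add_comm]; exact add_le_add (ihn c) le_rfl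

/-- uniform-mesh bound on the relative interface jump of `p`-th order
ENO reconstruction.  Cell 0 is `[x_0, x_1]` and cell 1 is `[x_1, x_2]`; the jump of
the reconstructed values at the interface `x_1`, divided by the jump of the cell
averages, is at most `2^(p-1) (1/p!) ∑_{k=0}^{p-1} k! (p-k-1)!`. -/
theorem eno_reconstruction_uniform_jump_bound (p : ℕ) (hp : 1 ≤ p) (h : ℝ)
    (hh : 0 < h) (x vbar V : ℤ → ℝ)
    (hx : ∀ j, x (j + 1) = x j + h)
    (hV : ∀ j, V (j + 1) - V j = h * vbar j)
    (hne : vbar 1 ≠ vbar 0) :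
    ((Polynomial.derivative (Lagrange.interpolate
        (Finset.Icc (1 + enoOffsetR x V 1 p) (1 + enoOffsetR x V 1 p + p)) x V)).eval (x 1) -
     (Polynomial.derivative (Lagrange.interpolate
        (Finset.Icc (enoOffsetR x V 0 p) (enoOffsetR x V 0 p + p)) x V)).eval (x 1)) /
      (vbar 1 - vbar 0) ≤
      2 ^ (p - 1) * (1 / (p.factorial : ℝ)) *
        ∑ k ∈ Finset.range p, ((k.factorial : ℝ) * ((p - k - 1).factorial : ℝ)) := by
  have hinj : Function.Injective x := by
    intro a b hab
    have h1 := x_sub hx a b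
    rw [hab, sub_self] at h1
    have h2 : ((b : ℝ) - a) = 0 := by
      rcases mul_eq_zero.1 h1.symm with h3 | h3
      · exact h3
      · exact absurd h3 hh.ne'
    have h4 : (b : ℝ) = (a : ℝ) := by linarith
    exact_mod_cast h4.symm
  set r0 := enoOffsetR x V 0 p with hr0def
  set r1 := enoOffsetR x V 1 p with hr1def
  obtain ⟨hr0a, hr0b⟩ := eno_bounds x V 0 p hp
  obtain ⟨hr1a, hr1b⟩ := eno_bounds x V 1 p hp
  rw [← hr0def] at hr0a hr0b
  rw [← hr1def] at hr1a hr1b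
  have hΔ : 0 < |vbar 1 - vbar 0| := abs_pos.2 (sub_ne_zero.2 hne)
  have hS0 : (0:ℝ) ≤ ∑ k ∈ Finset.range p, ((k.factorial : ℝ) * ((p - k - 1).factorial : ℝ)) :=
    Finset.sum_nonneg fun k _ => by positivity
  set g : ℤ → ℝ := fun a =>
    (Polynomial.derivative (Lagrange.interpolate (Finset.Icc a (a + (p:ℤ))) x V)).eval (x 1)
    with hgdef
  show (g (1 + r1) - g r0) / (vbar 1 - vbar 0) ≤ _
  suffices habs : |g (1 + r1) - g r0| ≤ (2 ^ (p - 1) * (1 / (p.factorial : ℝ)) *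
      ∑ k ∈ Finset.range p, ((k.factorial : ℝ) * ((p - k - 1).factorial : ℝ))) * |vbar 1 - vbar 0| by
    calc (g (1 + r1) - g r0) / (vbar 1 - vbar 0)
        ≤ |(g (1 + r1) - g r0) / (vbar 1 - vbar 0)| := le_abs_self _
      _ = |g (1 + r1) - g r0| / |vbar 1 - vbar 0| := abs_div _ _
      _ ≤ _ := by rw [div_le_iff₀ hΔ]; exact habs
  set Bp : ℝ := 2 ^ (p - 1) * |vbar 1 - vbar 0| / ((p + 1).factorial * h ^ p) with hBpdef
  have hBp0 : 0 ≤ Bp := by positivity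
  set c : ℤ := min r0 (1 + r1) with hcdef
  set n : ℕ := (max r0 (1 + r1) - c).toNat with hndef
  have hcn : max r0 (1 + r1) = c + n := by omega
  have h1 : |g (1 + r1) - g r0| = |g (c + n) - g c| := by
    rcases le_total r0 (1 + r1) with hle | hle
    · have e1 : c = r0 := by omega
      have e2 : c + (n : ℤ) = 1 + r1 := by omega
      rw [e2, e1]
    · have e1 : c = 1 + r1 := by omega
      have e2 : c + (n : ℤ) = r0 := by omega
      rw [e2, e1, abs_sub_comm]
  have hterm : ∀ t ∈ Finset.range n, |g (c + t + 1) - g (c + t)|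
      ≤ Bp * (|Wd x p (c + t)| + |Wd x p (c + t + 1)|) := by
    intro t ht
    rw [Finset.mem_range] at ht
    have ht' : (t : ℤ) < n := by exact_mod_cast ht
    have hi0 : c + t ≤ 0 := by omega
    have hip : 1 ≤ c + t + p := by omega
    have hj := jump (V := V) hinj p (c + t) hi0 hip
    have hdd := eno_inv hh hx hV p hp (c + t) (by omega) (by omega)
    calc |g (c + t + 1) - g (c + t)|
        = |dd x V (p + 1) (c + t) * (Wd x p (c + t) - Wd x p (c + t + 1))| := by
          rw [hgdef]; simp only []; rw [hj]
      _ = |dd x V (p + 1) (c + t)| * |Wd x p (c + t) - Wd x p (c + t + 1)| := abs_mul _ _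
      _ ≤ Bp * (|Wd x p (c + t)| + |Wd x p (c + t + 1)|) := by
          apply mul_le_mul hdd (abs_sub _ _) (abs_nonneg _) hBp0
  have h3 : ∑ t ∈ Finset.range n, (|Wd x p (c + t)| + |Wd x p (c + t + 1)|)
      ≤ ∑ m ∈ Finset.range p, (|Wd x p (1 - p + m)| + |Wd x p (1 - p + m + 1)|) := by
    have e1 : ∑ t ∈ Finset.range n, (|Wd x p (c + t)| + |Wd x p (c + t + 1)|)
        = ∑ j ∈ (Finset.range n).image (fun t : ℕ => c + (t : ℤ)),
            (|Wd x p j| + |Wd x p (j + 1)|) :=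
      (Finset.sum_image (f := fun j : ℤ => |Wd x p j| + |Wd x p (j + 1)|)
        (g := fun t : ℕ => c + (t:ℤ)) (fun a _ b _ hab => by
          have hab' : c + (a:ℤ) = c + (b:ℤ) := hab
          omega)).symm
    have e2 : ∑ m ∈ Finset.range p, (|Wd x p (1 - p + m)| + |Wd x p (1 - p + m + 1)|)
        = ∑ j ∈ (Finset.range p).image (fun m : ℕ => 1 - (p : ℤ) + (m : ℤ)),
            (|Wd x p j| + |Wd x p (j + 1)|) :=
      (Finset.sum_image (f := fun j : ℤ => |Wd x p j| + |Wd x p (j + 1)|)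
        (g := fun m : ℕ => 1 - (p:ℤ) + (m:ℤ)) (fun a _ b _ hab => by
          have hab' : 1 - (p:ℤ) + (a:ℤ) = 1 - (p:ℤ) + (b:ℤ) := hab
          omega)).symm
    rw [e1, e2]
    apply Finset.sum_le_sum_of_subset_of_nonneg
    · intro j hj
      simp only [Finset.mem_image, Finset.mem_range] at hj ⊢
      obtain ⟨t, ht, rfl⟩ := hj
      exact ⟨(c + t - 1 + p).toNat, by omega, by omega⟩
    · intro j _ _
      positivity
  have h4 : ∀ m ∈ Finset.range p, |Wd x p (1 - p + m)| + |Wd x p (1 - p + m + 1)|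
      = h ^ p * (((p:ℝ) + 1) * ((m.factorial : ℝ) * ((p - m - 1).factorial : ℝ))) := by
    intro m hm
    rw [Finset.mem_range] at hm
    have w1 : |Wd x p (1 - (p:ℤ) + m)| = h ^ p * ((p - m).factorial : ℝ) * (m.factorial : ℝ) := by
      have hw := Wd_abs hh hx p (p - m) m (by omega)
      rw [show (1 - ((p - m : ℕ) : ℤ)) = 1 - (p : ℤ) + m from by omega] at hw
      exact hw
    have w2 : |Wd x p (1 - (p:ℤ) + m + 1)|
        = h ^ p * ((p - m - 1).factorial : ℝ) * ((m + 1).factorial : ℝ) := by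
      have hw := Wd_abs hh hx p (p - m - 1) (m + 1) (by omega)
      rw [show (1 - ((p - m - 1 : ℕ) : ℤ)) = 1 - (p : ℤ) + m + 1 from by omega] at hw
      exact hw
    rw [w1, w2]
    have ht := Tident p m hm
    linear_combination (h ^ p) * ht
  calc |g (1 + r1) - g r0| = |g (c + n) - g c| := h1
    _ ≤ ∑ t ∈ Finset.range n, |g (c + t + 1) - g (c + t)| := tele g n c
    _ ≤ ∑ t ∈ Finset.range n, Bp * (|Wd x p (c + t)| + |Wd x p (c + t + 1)|) :=
        Finset.sum_le_sum hterm
    _ = Bp * ∑ t ∈ Finset.range n, (|Wd x p (c + t)| + |Wd x p (c + t + 1)|) :=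
        (Finset.mul_sum _ _ _).symm
    _ ≤ Bp * ∑ m ∈ Finset.range p, (|Wd x p (1 - p + m)| + |Wd x p (1 - p + m + 1)|) :=
        mul_le_mul_of_nonneg_left h3 hBp0
    _ = Bp * (h ^ p * (((p:ℝ) + 1) *
          ∑ k ∈ Finset.range p, ((k.factorial : ℝ) * ((p - k - 1).factorial : ℝ)))) := by
        rw [Finset.sum_congr rfl h4, ← Finset.mul_sum, ← Finset.mul_sum]
    _ = (2 ^ (p - 1) * (1 / (p.factorial : ℝ)) *
          ∑ k ∈ Finset.range p, ((k.factorial : ℝ) * ((p - k - 1).factorial : ℝ)))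
        * |vbar 1 - vbar 0| := by
        rw [hBpdef, Nat.factorial_succ]
        have hfp : (0:ℝ) < (p.factorial : ℝ) := by positivity
        have hhp : (0:ℝ) < h ^ p := by positivity
        push_cast
        generalize (p.factorial : ℝ) = F at hfp ⊢
        generalize h ^ p = H at hhp ⊢
        generalize ∑ k ∈ Finset.range p, ((k.factorial : ℝ) * ((p - k - 1).factorial : ℝ)) = S
        have hp1 : (0:ℝ) < (p:ℝ) + 1 := by positivity
        field_simp
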